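/- Let X : ℝ² → ℝ² be a ℤ²-equivariant C¹ diffeomorphism with positive Jacobian determinant δ(x) = det(DX(x)) satisfying δ(x) ≤ Λ for all x, for some constant Λ > 0. Let θ, η : ℝ² → ℝ be continuous and ℤ²-periodic. Then ∫_Q (η(x) − θ(X(x)) δ(x)) η(x) dx ≥ (1/2) ∫_Q η(x)² dx − (Λ/2) ∫_Q θ(y)² dy, where Q = [0,1]². -/

import Mathlib

open MeasureTheory

noncomputable section

abbrev E2 : Type := EuclideanSpace ℝ (Fin 2)

/-- The unit fundamental domain `Q = [0,1]²`. -/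
def Q : Set E2 := {x | ∀ i, x i ∈ Set.Icc (0:ℝ) 1}

/-- The vector in `ℝ²` with integer coordinates `k`. -/
def intVec (k : Fin 2 → ℤ) : E2 := WithLp.toLp 2 (fun i => (k i : ℝ))

abbrev stdB : Module.Basis (Fin 2) ℝ E2 := (EuclideanSpace.basisFun (Fin 2) ℝ).toBasis
lemma stdB_repr (x : E2) (i : Fin 2) : stdB.repr x i = x i := rfl
lemma stdB_apply_self (i : Fin 2) : (stdB i) i = 1 := by
  have := stdB_repr (stdB i) i
  rw [Module.Basis.repr_self, Finsupp.single_eq_same] at this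
  exact this.symm

lemma hyperplane_null (i : Fin 2) : volume {x : E2 | x i = 1} = 0 := by
  have hker : LinearMap.ker (stdB.coord i) ≠ ⊤ := by
    intro h
    have : stdB.coord i (stdB i) = 0 := by
      rw [← LinearMap.mem_ker, h]; trivial
    simp [Module.Basis.coord_apply] at this
  have hpre : (fun x : E2 => x + stdB i) ⁻¹' {x : E2 | x i = 1}
      = (LinearMap.ker (stdB.coord i) : Set E2) := by
    ext x
    simp only [Set.mem_preimage, Set.mem_setOf_eq, SetLike.mem_coe, LinearMap.mem_ker,
      Module.Basis.coord_apply, stdB_repr]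
    rw [show (x + stdB i) i = x i + (stdB i) i from rfl, stdB_apply_self]
    constructor
    · intro h; linarith
    · intro h; linarith
  calc volume {x : E2 | x i = 1}
      = volume ((fun x : E2 => x + stdB i) ⁻¹' {x : E2 | x i = 1}) :=
        (measure_preimage_add_right volume _ _).symm
    _ = 0 := by rw [hpre]; exact Measure.addHaar_submodule _ _ hker

def Q0 : Set E2 := ZSpan.fundamentalDomain stdB

lemma mem_Q0 {x : E2} : x ∈ Q0 ↔ ∀ i, x i ∈ Set.Ico (0:ℝ) 1 := by
  simp only [Q0, ZSpan.mem_fundamentalDomain, stdB_repr]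

lemma Q0_ae_Q : Q0 =ᵐ[volume] Q := by
  rw [← measure_symmDiff_eq_zero_iff]
  refine measure_mono_null (fun x hx => ?_) (measure_union_null (hyperplane_null 0) (hyperplane_null 1))
  rcases hx with h | h
  · exact absurd (fun i => Set.Ico_subset_Icc_self ((mem_Q0.1 h.1) i)) h.2
  · obtain ⟨hQ, hn⟩ := h
    rw [mem_Q0] at hn
    push_neg at hn
    obtain ⟨i, hi⟩ := hn
    have h1 : x i = 1 := by
      have := hQ i
      simp only [Set.mem_Icc] at this
      simp only [Set.mem_Ico] at hi
      rcases lt_or_ge (x i) 1 with h | h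
      · exact absurd ⟨this.1, h⟩ hi
      · linarith [this.2]
    fin_cases i
    · exact Or.inl h1
    · exact Or.inr h1


lemma lattice_eq_intVec (g : Submodule.span ℤ (Set.range stdB)) :
    ∃ k : Fin 2 → ℤ, (g : E2) = intVec k := by
  have h := (stdB.mem_span_iff_repr_mem ℤ (g : E2)).mp g.2
  choose k hk using h
  refine ⟨k, PiLp.ext fun i => ?_⟩
  have := hk i
  rw [stdB_repr] at this
  simpa [intVec] using this.symm

lemma key_identity (X : E2 → E2) (θ : E2 → ℝ)
    (hX : ContDiff ℝ 1 X) (hXbij : Function.Bijective X)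
    (hXequiv : ∀ (x : E2) (k : Fin 2 → ℤ), X (x + intVec k) = X x + intVec k)
    (hθper : ∀ (x : E2) (k : Fin 2 → ℤ), θ (x + intVec k) = θ x) :
    ∫ x in Q0, |(fderiv ℝ X x).det| * θ (X x) ^ 2 = ∫ y in Q0, θ y ^ 2 := by
  set L := Submodule.span ℤ (Set.range stdB)
  have hFD : IsAddFundamentalDomain L Q0 volume := ZSpan.isAddFundamentalDomain stdB volume
  set eX : E2 ≃ E2 := Equiv.ofBijective X hXbij with heX
  have hXmeas : Measurable X := hX.continuous.measurable
  have hEmb : MeasurableEmbedding X := hXmeas.measurableEmbedding hXbij.injective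
  have hsymm_meas : Measurable eX.symm := by
    intro s hs
    have : eX.symm ⁻¹' s = X '' s := by
      rw [← Equiv.image_eq_preimage_symm]; rfl
    rw [this]
    exact hEmb.measurableSet_image' hs
  have hqmp : Measure.QuasiMeasurePreserving eX.symm volume volume := by
    refine ⟨hsymm_meas, ?_⟩
    refine Measure.AbsolutelyContinuous.mk fun s hs h0 => ?_
    rw [Measure.map_apply hsymm_meas hs]
    have : eX.symm ⁻¹' s = X '' s := by rw [← Equiv.image_eq_preimage_symm]; rfl
    rw [this]
    exact addHaar_image_eq_zero_of_differentiableOn_of_addHaar_eq_zero volume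
      (hX.differentiable one_ne_zero).differentiableOn h0
  have hsemi : ∀ g : L, Function.Semiconj eX ((Equiv.refl L) g +ᵥ ·) (g +ᵥ ·) := by
    intro g x
    obtain ⟨k, hk⟩ := lattice_eq_intVec g
    show X (↑g + x) = ↑g + X x
    rw [hk, add_comm, hXequiv, add_comm]
  have hFD' : IsAddFundamentalDomain L (eX '' Q0) volume :=
    hFD.image_of_equiv eX hqmp (Equiv.refl L) hsemi
  have hinv : ∀ (g : L) (x : E2), θ (g +ᵥ x) ^ 2 = θ x ^ 2 := by
    intro g x
    obtain ⟨k, hk⟩ := lattice_eq_intVec g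
    show θ (↑g + x) ^ 2 = θ x ^ 2
    rw [hk, add_comm, hθper]
  have hQ0meas : MeasurableSet Q0 := ZSpan.fundamentalDomain_measurableSet stdB
  have hcov : ∫ x in Q0, |(fderiv ℝ X x).det| * θ (X x) ^ 2
      = ∫ y in eX '' Q0, θ y ^ 2 := by
    have := integral_image_eq_integral_abs_det_fderiv_smul volume hQ0meas
      (fun x _ => ((hX.differentiable one_ne_zero) x).hasFDerivAt.hasFDerivWithinAt)
      hXbij.injective.injOn (fun y => θ y ^ 2)
    rw [show eX '' Q0 = X '' Q0 from rfl, this]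
    simp [smul_eq_mul]
  rw [hcov]
  have i1 : MeasurableVAdd L E2 := (inferInstance : MeasurableVAdd L.toAddSubgroup E2)
  have i2 : VAddInvariantMeasure L E2 volume :=
    (inferInstance : VAddInvariantMeasure L.toAddSubgroup E2 volume)
  exact hFD'.setIntegral_eq hFD hinv

lemma Q_closed : IsClosed Q := by
  have : Q = ⋂ i, (fun x : E2 => x i) ⁻¹' Set.Icc (0:ℝ) 1 := by
    ext x; simp [Q, Set.mem_iInter]
  rw [this]
  exact isClosed_iInter fun i =>
    (isClosed_Icc).preimage (EuclideanSpace.proj (𝕜 := ℝ) i).continuous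

lemma Q_compact : IsCompact Q := by
  refine Metric.isCompact_of_isClosed_isBounded Q_closed ?_
  rw [Metric.isBounded_iff_subset_closedBall 0]
  refine ⟨2, fun x hx => ?_⟩
  simp only [Metric.mem_closedBall, dist_zero_right]
  have : ‖x‖ ^ 2 ≤ 2 := by
    rw [EuclideanSpace.norm_eq, Real.sq_sqrt (by positivity)]
    have : ∀ i, ‖x i‖ ^ 2 ≤ 1 := by
      intro i
      have := hx i
      simp only [Set.mem_Icc] at this
      rw [Real.norm_eq_abs, sq_abs]
      nlinarith [this.1, this.2]
    calc (∑ i, ‖x i‖ ^ 2) ≤ ∑ _i : Fin 2, (1:ℝ) := Finset.sum_le_sum fun i _ => this i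
    _ = 2 := by simp
  nlinarith [norm_nonneg x]


/-- Coercivity bound: if `X` is a `ℤ²`-equivariant `C¹` diffeomorphism with positive Jacobian
determinant `δ ≤ Λ`, and `θ, η` are continuous and `ℤ²`-periodic, then
`∫_Q (η(x) − θ(X(x)) δ(x)) η(x) dx ≥ (1/2) ∫_Q η² − (Λ/2) ∫_Q θ²`. -/
theorem characteristic_coercivity_bound
    (Λ : ℝ) (hΛ : 0 < Λ)
    (X : E2 → E2) (θ η : E2 → ℝ)
    (hX : ContDiff ℝ 1 X) (hXbij : Function.Bijective X)
    (hXequiv : ∀ (x : E2) (k : Fin 2 → ℤ), X (x + intVec k) = X x + intVec k)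
    (hδpos : ∀ x : E2, 0 < (fderiv ℝ X x).det)
    (hδub : ∀ x : E2, (fderiv ℝ X x).det ≤ Λ)
    (hθ : Continuous θ)
    (hθper : ∀ (x : E2) (k : Fin 2 → ℤ), θ (x + intVec k) = θ x)
    (hη : Continuous η)
    (hηper : ∀ (x : E2) (k : Fin 2 → ℤ), η (x + intVec k) = η x) :
    ∫ x in Q, (η x - θ (X x) * (fderiv ℝ X x).det) * η x
      ≥ (1 / 2) * (∫ x in Q, η x ^ 2) - (Λ / 2) * ∫ y in Q, θ y ^ 2 := by
  set δ : E2 → ℝ := fun x => (fderiv ℝ X x).det with hδ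
  have hδcont : Continuous δ :=
    ContinuousLinearMap.continuous_det.comp (hX.continuous_fderiv one_ne_zero)
  have hQmeas : MeasurableSet Q := Q_closed.measurableSet
  -- integrability of everything on Q
  have hi1 : IntegrableOn (fun x => (η x - θ (X x) * δ x) * η x) Q volume :=
    (((hη.sub ((hθ.comp hX.continuous).mul hδcont)).mul hη)).continuousOn.integrableOn_compact Q_compact
  have hi2 : IntegrableOn (fun x => δ x * θ (X x) ^ 2) Q volume :=
    ((hδcont.mul ((hθ.comp hX.continuous).pow 2))).continuousOn.integrableOn_compact Q_compact
  have hiη : IntegrableOn (fun x => η x ^ 2) Q volume :=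
    (hη.pow 2).continuousOn.integrableOn_compact Q_compact
  have hi3 : IntegrableOn (fun x => (1/2) * η x ^ 2 - (Λ/2) * (δ x * θ (X x) ^ 2)) Q volume :=
    (hiη.const_mul _).sub (hi2.const_mul _)
  -- pointwise bound
  have hpt : ∀ x ∈ Q, (1/2) * η x ^ 2 - (Λ/2) * (δ x * θ (X x) ^ 2)
      ≤ (η x - θ (X x) * δ x) * η x := by
    intro x _
    nlinarith [sq_nonneg (η x - δ x * θ (X x)), hδpos x, hδub x, sq_nonneg (θ (X x)),
      mul_nonneg (mul_nonneg (sub_nonneg.2 (hδub x)) (hδpos x).le) (sq_nonneg (θ (X x)))]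
  have hmono := setIntegral_mono_on hi3 hi1 hQmeas hpt
  -- key identity transfer
  have hkey : ∫ x in Q, δ x * θ (X x) ^ 2 = ∫ y in Q, θ y ^ 2 := by
    have e1 : ∫ x in Q, δ x * θ (X x) ^ 2 = ∫ x in Q0, δ x * θ (X x) ^ 2 :=
      setIntegral_congr_set Q0_ae_Q.symm
    have e2 : ∫ x in Q0, δ x * θ (X x) ^ 2 = ∫ x in Q0, |δ x| * θ (X x) ^ 2 := by
      refine setIntegral_congr_fun (ZSpan.fundamentalDomain_measurableSet stdB) fun x _ => ?_
      rw [abs_of_pos (hδpos x)]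
    have e3 := key_identity X θ hX hXbij hXequiv hθper
    have e4 : ∫ y in Q0, θ y ^ 2 = ∫ y in Q, θ y ^ 2 := setIntegral_congr_set Q0_ae_Q
    rw [e1, e2, e3, e4]
  have hsplit : ∫ x in Q, ((1/2) * η x ^ 2 - (Λ/2) * (δ x * θ (X x) ^ 2))
      = (1/2) * (∫ x in Q, η x ^ 2) - (Λ/2) * ∫ x in Q, δ x * θ (X x) ^ 2 := by
    rw [integral_sub (hiη.const_mul _) (hi2.const_mul _), MeasureTheory.integral_const_mul, MeasureTheory.integral_const_mul]
  rw [hsplit, hkey] at hmono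
  exact hmono
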